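/- Let C = (1, c₂, ..., cₙ) with n ≥ 2 and suppose the subsystem C' = (1, c₂, ..., c_{n-1}) is canonical. Then C is canonical if and only if grd_C(m·c_{n-1}) ≤ m, where m = ⌈cₙ / c_{n-1}⌉. -/
import Mathlib


open Finset

/-- `x` is a representation of value `v` in the coin system `c 1, …, c n`. -/
def IsRepr (n : ℕ) (c : ℕ → ℕ) (v : ℕ) (x : ℕ → ℕ) : Prop :=
  ∑ i ∈ Finset.Icc 1 n, c i * x i = v

/-- Minimum number of coins over all representations of `v`. -/
noncomputable def opt (n : ℕ) (c : ℕ → ℕ) (v : ℕ) : ℕ :=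
  sInf {k | ∃ x : ℕ → ℕ, IsRepr n c v x ∧ ∑ i ∈ Finset.Icc 1 n, x i = k}

/-- Number of coins used by the greedy algorithm to pay `v`. -/
def grd (n : ℕ) (c : ℕ → ℕ) (v : ℕ) : ℕ :=
  if hv : v = 0 then 0
  else
    let m := ((Finset.Icc 1 n).filter (fun i => c i ≤ v)).sup c
    if hm : 0 < m then grd n c (v - m) + 1 else 0
termination_by v
decreasing_by omega

/-- The system is canonical: greedy is optimal for every positive value. -/
def Canonical (n : ℕ) (c : ℕ → ℕ) : Prop :=
  ∀ v, 0 < v → opt n c v = grd n c v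

/-- `w` is a counterexample to the system. -/
def IsCex (n : ℕ) (c : ℕ → ℕ) (w : ℕ) : Prop :=
  0 < w ∧ opt n c w < grd n c w

/-- `w` is the minimum counterexample to the system. -/
def MinCex (n : ℕ) (c : ℕ → ℕ) (w : ℕ) : Prop :=
  IsCex n c w ∧ ∀ u, IsCex n c u → w ≤ u

/-- A (currency) system: first coin is `1` and coins strictly increase. -/
def IsSystem (n : ℕ) (c : ℕ → ℕ) : Prop :=
  c 1 = 1 ∧ StrictMonoOn c (Set.Icc 1 n)

section Aux

variable {n : ℕ} {c : ℕ → ℕ}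

lemma grd_zero (n : ℕ) (c : ℕ → ℕ) : grd n c 0 = 0 := by rw [grd]; simp

lemma grd_succ {v : ℕ} (hv : v ≠ 0)
    (hsup : 0 < ((Finset.Icc 1 n).filter (fun i => c i ≤ v)).sup c) :
    grd n c v = grd n c (v - ((Finset.Icc 1 n).filter (fun i => c i ≤ v)).sup c) + 1 := by
  rw [grd]; simp [hv, hsup]

lemma opt_le_repr {v k : ℕ} {x : ℕ → ℕ} (hx : IsRepr n c v x)
    (hk : ∑ i ∈ Finset.Icc 1 n, x i = k) : opt n c v ≤ k :=
  Nat.sInf_le ⟨x, hx, hk⟩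

lemma opt_zero (n : ℕ) (c : ℕ → ℕ) : opt n c 0 = 0 := by
  have h : opt n c 0 ≤ 0 := opt_le_repr (x := fun _ => 0) (by simp [IsRepr]) (by simp)
  omega

lemma opt_exists (h1 : c 1 = 1) (hn : 1 ≤ n) (v : ℕ) :
    ∃ x : ℕ → ℕ, IsRepr n c v x ∧ ∑ i ∈ Finset.Icc 1 n, x i = opt n c v := by
  have hne : {k | ∃ x : ℕ → ℕ, IsRepr n c v x ∧ ∑ i ∈ Finset.Icc 1 n, x i = k}.Nonempty := by
    refine ⟨v, fun j => if j = 1 then v else 0, ?_, ?_⟩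
    · unfold IsRepr
      rw [Finset.sum_eq_single_of_mem 1 (Finset.mem_Icc.mpr ⟨le_refl 1, hn⟩)
        (fun b _ hb => by simp [hb])]
      simp [h1]
    · rw [Finset.sum_ite_eq' _ 1 (fun _ => v)]
      simp [Finset.mem_Icc, hn]
  exact Nat.sInf_mem hne

lemma opt_pos (h1 : c 1 = 1) (hn : 1 ≤ n) {v : ℕ} (hv : 0 < v) : 0 < opt n c v := by
  rcases Nat.eq_zero_or_pos (opt n c v) with h | h
  · exfalso
    obtain ⟨x, hx, hsum⟩ := opt_exists h1 hn v
    rw [h, Finset.sum_eq_zero_iff] at hsum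
    have : v = 0 := by
      rw [← hx]
      exact Finset.sum_eq_zero fun i hi => by rw [hsum i hi, mul_zero]
    omega
  · exact h

lemma isRepr_single {i : ℕ} (hi : i ∈ Finset.Icc 1 n) (k : ℕ) :
    IsRepr n c (c i * k) (fun j => if j = i then k else 0) := by
  unfold IsRepr
  rw [Finset.sum_eq_single_of_mem i hi (fun b _ hb => by simp [hb])]
  simp

lemma opt_le_coin {i : ℕ} (hi : i ∈ Finset.Icc 1 n) (k : ℕ) : opt n c (c i * k) ≤ k := by
  refine opt_le_repr (isRepr_single hi k) ?_
  rw [Finset.sum_ite_eq' _ i (fun _ => k)]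
  simp [hi]

lemma opt_subadd (h1 : c 1 = 1) (hn : 1 ≤ n) (a b : ℕ) :
    opt n c (a + b) ≤ opt n c a + opt n c b := by
  obtain ⟨x, hx, hxs⟩ := opt_exists h1 hn a
  obtain ⟨y, hy, hys⟩ := opt_exists h1 hn b
  refine opt_le_repr (x := fun i => x i + y i) ?_ ?_
  · unfold IsRepr at *
    simp only [mul_add, Finset.sum_add_distrib, hx, hy]
  · rw [Finset.sum_add_distrib, hxs, hys]

lemma sum_Icc_split (hn : 1 ≤ n) (f : ℕ → ℕ) :
    ∑ j ∈ Finset.Icc 1 n, f j = (∑ j ∈ Finset.Icc 1 (n-1), f j) + f n := by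
  obtain ⟨p, rfl⟩ : ∃ p, n = p + 1 := ⟨n - 1, by omega⟩
  rw [Finset.sum_Icc_succ_top (by omega) f]
  simp

end Aux

section Grd

variable {n : ℕ} {c : ℕ → ℕ}

lemma coin_le_top (hsys : IsSystem n c) (hn : 1 ≤ n) {i : ℕ} (hi : i ∈ Finset.Icc 1 n) :
    c i ≤ c n := by
  rw [Finset.mem_Icc] at hi
  exact hsys.2.monotoneOn (Set.mem_Icc.mpr ⟨hi.1, hi.2⟩) (Set.mem_Icc.mpr ⟨hn, le_refl n⟩) hi.2

lemma coin_pos (hsys : IsSystem n c) {i : ℕ} (hi : i ∈ Finset.Icc 1 n) : 0 < c i := by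
  rw [Finset.mem_Icc] at hi
  have : c 1 ≤ c i :=
    hsys.2.monotoneOn (Set.mem_Icc.mpr ⟨le_refl 1, le_trans hi.1 hi.2⟩)
      (Set.mem_Icc.mpr ⟨hi.1, hi.2⟩) hi.1
  have h1 := hsys.1
  omega

lemma sup_pos (h1 : c 1 = 1) (hn : 1 ≤ n) {v : ℕ} (hv : 0 < v) :
    0 < ((Finset.Icc 1 n).filter (fun i => c i ≤ v)).sup c := by
  have h1m : 1 ∈ (Finset.Icc 1 n).filter (fun i => c i ≤ v) :=
    Finset.mem_filter.mpr ⟨Finset.mem_Icc.mpr ⟨le_refl 1, hn⟩, by rw [h1]; exact hv⟩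
  have := Finset.le_sup (f := c) h1m
  omega

lemma sup_le_val {v : ℕ} : ((Finset.Icc 1 n).filter (fun i => c i ≤ v)).sup c ≤ v :=
  Finset.sup_le fun i hi => (Finset.mem_filter.mp hi).2

lemma sup_eq_top (hsys : IsSystem n c) (hn : 1 ≤ n) {v : ℕ} (hv : c n ≤ v) :
    ((Finset.Icc 1 n).filter (fun i => c i ≤ v)).sup c = c n := by
  refine le_antisymm (Finset.sup_le fun i hi => coin_le_top hsys hn (Finset.mem_filter.mp hi).1) ?_
  exact Finset.le_sup (Finset.mem_filter.mpr ⟨Finset.mem_Icc.mpr ⟨hn, le_refl n⟩, hv⟩)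

lemma grd_top (hsys : IsSystem n c) (hn : 1 ≤ n) {v : ℕ} (hv : c n ≤ v) :
    grd n c v = grd n c (v - c n) + 1 := by
  have hcn : 0 < c n := coin_pos hsys (Finset.mem_Icc.mpr ⟨hn, le_refl n⟩)
  rw [grd_succ (show v ≠ 0 by omega) (by rw [sup_eq_top hsys hn hv]; exact hcn),
    sup_eq_top hsys hn hv]

lemma grd_lower (hsys : IsSystem n c) (hn : 2 ≤ n) :
    ∀ v, v < c n → grd n c v = grd (n-1) c v := by
  intro v
  induction v using Nat.strong_induction_on with
  | _ v ih =>
    intro hv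
    rcases Nat.eq_zero_or_pos v with rfl | hv0
    · rw [grd_zero, grd_zero]
    · have hfe : (Finset.Icc 1 n).filter (fun i => c i ≤ v)
          = (Finset.Icc 1 (n-1)).filter (fun i => c i ≤ v) := by
        ext i
        simp only [Finset.mem_filter, Finset.mem_Icc]
        constructor
        · rintro ⟨⟨hi1, hi2⟩, hi3⟩
          refine ⟨⟨hi1, ?_⟩, hi3⟩
          by_contra h
          have hin : i = n := by omega
          rw [hin] at hi3
          omega
        · rintro ⟨⟨hi1, hi2⟩, hi3⟩
          exact ⟨⟨hi1, by omega⟩, hi3⟩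
      have hp := sup_pos hsys.1 (show 1 ≤ n by omega) hv0
      have hle : ((Finset.Icc 1 n).filter (fun i => c i ≤ v)).sup c ≤ v := sup_le_val
      rw [grd_succ (show v ≠ 0 by omega) hp,
        grd_succ (n := n-1) (show v ≠ 0 by omega) (by rw [← hfe]; exact hp), ← hfe]
      exact congrArg (· + 1) (ih _ (by omega) (by omega))

lemma grd_mul_add (hsys : IsSystem n c) (hn : 1 ≤ n) (k t : ℕ) :
    grd n c (k * c n + t) = k + grd n c t := by
  induction k with
  | zero => simp
  | succ k ih =>
    have hcn : 0 < c n := coin_pos hsys (Finset.mem_Icc.mpr ⟨hn, le_refl n⟩)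
    have hkd : (k+1) * c n = k * c n + c n := by ring
    have h : c n ≤ (k+1) * c n + t := by omega
    rw [grd_top hsys hn h, show (k+1) * c n + t - c n = k * c n + t by omega, ih]
    omega

lemma opt_le_grd (hsys : IsSystem n c) (hn : 1 ≤ n) : ∀ v, opt n c v ≤ grd n c v := by
  intro v
  induction v using Nat.strong_induction_on with
  | _ v ih =>
    rcases Nat.eq_zero_or_pos v with rfl | hv0
    · rw [opt_zero, grd_zero]
    · have hne : ((Finset.Icc 1 n).filter (fun i => c i ≤ v)).Nonempty :=
        ⟨1, Finset.mem_filter.mpr ⟨Finset.mem_Icc.mpr ⟨le_refl 1, hn⟩, by rw [hsys.1]; exact hv0⟩⟩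
      obtain ⟨i, hi, hie⟩ := Finset.exists_mem_eq_sup _ hne c
      have hi1 := (Finset.mem_filter.mp hi).1
      have hi2 := (Finset.mem_filter.mp hi).2
      have hipos : 0 < c i := coin_pos hsys hi1
      rw [grd_succ (show v ≠ 0 by omega) (by rw [hie]; exact hipos), hie]
      have step : opt n c v ≤ opt n c (v - c i) + 1 := by
        have h2 : opt n c v ≤ opt n c (v - c i) + opt n c (c i) := by
          have := opt_subadd hsys.1 hn (v - c i) (c i)
          rwa [show v - c i + c i = v by omega] at this
        have h3 : opt n c (c i) ≤ 1 := by
          have := opt_le_coin (c := c) hi1 1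
          rwa [mul_one] at this
        omega
      have := ih (v - c i) (by omega)
      omega

end Grd

section Restrict

variable {n : ℕ} {c : ℕ → ℕ}

lemma opt_restrict (h1 : c 1 = 1) (hn : 2 ≤ n) (v : ℕ) :
    opt n c v ≤ opt (n-1) c v := by
  obtain ⟨x, hx, hsum⟩ := opt_exists h1 (show 1 ≤ n - 1 by omega) v
  set x' : ℕ → ℕ := fun j => if j = n then 0 else x j with hx'
  have hagree : ∀ g : ℕ → ℕ, ∀ j ∈ Finset.Icc 1 (n-1), g j * x' j = g j * x j := by
    intro g j hj
    rw [Finset.mem_Icc] at hj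
    simp only [hx']
    rw [if_neg (by omega)]
  refine opt_le_repr (x := x') ?_ ?_
  · unfold IsRepr at *
    rw [sum_Icc_split (by omega) (fun j => c j * x' j)]
    rw [Finset.sum_congr rfl (hagree c)]
    simp only [hx', if_pos rfl, mul_zero, add_zero]
    exact hx
  · rw [sum_Icc_split (by omega) x']
    have : ∑ j ∈ Finset.Icc 1 (n-1), x' j = ∑ j ∈ Finset.Icc 1 (n-1), x j := by
      refine Finset.sum_congr rfl fun j hj => ?_
      rw [Finset.mem_Icc] at hj
      simp only [hx']
      rw [if_neg (by omega)]
    rw [this, hsum]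
    simp [hx']

lemma opt_restrict' (h1 : c 1 = 1) (hn : 2 ≤ n) {v : ℕ} (hv : v < c n) :
    opt (n-1) c v ≤ opt n c v := by
  obtain ⟨x, hx, hsum⟩ := opt_exists h1 (show 1 ≤ n by omega) v
  have hterm : c n * x n ≤ v := by
    rw [← hx]
    exact Finset.single_le_sum (f := fun j => c j * x j) (fun j _ => Nat.zero_le _)
      (Finset.mem_Icc.mpr ⟨by omega, le_refl n⟩)
  have hxn : x n = 0 := by
    by_contra h
    have h1' : 1 ≤ x n := by omega
    have : c n ≤ c n * x n := Nat.le_mul_of_pos_right _ (by omega)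
    omega
  unfold IsRepr at hx
  rw [sum_Icc_split (show 1 ≤ n by omega) (fun j => c j * x j)] at hx
  rw [sum_Icc_split (show 1 ≤ n by omega) x] at hsum
  rw [hxn, mul_zero, add_zero] at hx
  rw [hxn, add_zero] at hsum
  exact opt_le_repr hx hsum

end Restrict

section MinCexFacts

variable {n : ℕ} {c : ℕ → ℕ}

lemma not_cex_eq (hsys : IsSystem n c) (hn : 1 ≤ n) {u : ℕ} (hu : 0 < u)
    (h : ¬ IsCex n c u) : opt n c u = grd n c u := by
  have h2 := opt_le_grd hsys hn u
  unfold IsCex at h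
  omega

lemma mincex_gt (hsys : IsSystem n c) (hn : 2 ≤ n) (hsub : Canonical (n-1) c)
    {w : ℕ} (hw : MinCex n c w) : c n < w := by
  obtain ⟨⟨hw0, hwlt⟩, _⟩ := hw
  by_contra h
  rcases lt_or_eq_of_le (le_of_not_gt h) with hlt | heq
  · -- w < c n
    have e1 : opt n c w = opt (n-1) c w :=
      le_antisymm (opt_restrict hsys.1 hn w) (opt_restrict' hsys.1 hn hlt)
    have e2 : grd n c w = grd (n-1) c w := grd_lower hsys hn w hlt
    have e3 : opt (n-1) c w = grd (n-1) c w := hsub w hw0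
    omega
  · -- w = c n
    subst heq
    have hg : grd n c (c n) = 1 := by
      rw [grd_top hsys (by omega) (le_refl (c n))]
      simp [grd_zero]
    have := opt_pos hsys.1 (show 1 ≤ n by omega) hw0
    omega

lemma mincex_opt (hsys : IsSystem n c) (hn : 2 ≤ n)
    {w : ℕ} (hw : MinCex n c w) (hgt : c n < w) : opt n c w = opt (n-1) c w := by
  obtain ⟨⟨hw0, hwlt⟩, hmin⟩ := hw
  refine le_antisymm (opt_restrict hsys.1 hn w) ?_
  obtain ⟨x, hx, hsum⟩ := opt_exists hsys.1 (show 1 ≤ n by omega) w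
  by_cases hxn : x n = 0
  · -- restricting x gives an (n-1)-representation of the same size
    unfold IsRepr at hx
    rw [sum_Icc_split (show 1 ≤ n by omega) (fun j => c j * x j)] at hx
    rw [sum_Icc_split (show 1 ≤ n by omega) x] at hsum
    rw [hxn, mul_zero, add_zero] at hx
    rw [hxn, add_zero] at hsum
    exact opt_le_repr hx hsum
  · exfalso
    -- remove one coin n
    have hx1 : 1 ≤ x n := by omega
    set y : ℕ → ℕ := fun j => if j = n then x n - 1 else x j with hy
    have hysum : ∑ j ∈ Finset.Icc 1 (n-1), c j * y j = ∑ j ∈ Finset.Icc 1 (n-1), c j * x j := by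
      refine Finset.sum_congr rfl fun j hj => ?_
      rw [Finset.mem_Icc] at hj
      simp only [hy]
      rw [if_neg (by omega)]
    have hycoin : ∑ j ∈ Finset.Icc 1 (n-1), y j = ∑ j ∈ Finset.Icc 1 (n-1), x j := by
      refine Finset.sum_congr rfl fun j hj => ?_
      rw [Finset.mem_Icc] at hj
      simp only [hy]
      rw [if_neg (by omega)]
    have hmul : c n * (x n - 1) + c n = c n * x n := by
      have : x n - 1 + 1 = x n := by omega
      calc c n * (x n - 1) + c n = c n * ((x n - 1) + 1) := by ring
        _ = c n * x n := by rw [this]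
    unfold IsRepr at hx
    rw [sum_Icc_split (show 1 ≤ n by omega) (fun j => c j * x j)] at hx
    rw [sum_Icc_split (show 1 ≤ n by omega) x] at hsum
    have hrepr : IsRepr n c (w - c n) y := by
      unfold IsRepr
      rw [sum_Icc_split (show 1 ≤ n by omega) (fun j => c j * y j), hysum]
      simp only [hy, if_pos rfl]
      omega
    have hycoins : ∑ j ∈ Finset.Icc 1 n, y j = opt n c w - 1 := by
      rw [sum_Icc_split (show 1 ≤ n by omega) y, hycoin]
      simp only [hy, if_pos rfl]
      omega
    have hople : opt n c (w - c n) ≤ opt n c w - 1 := opt_le_repr hrepr hycoins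
    have hwc0 : 0 < w - c n := by omega
    have hnotcex : ¬ IsCex n c (w - c n) := by
      intro hcex
      have := hmin _ hcex
      have hcnpos : 0 < c n := coin_pos hsys (Finset.mem_Icc.mpr ⟨by omega, le_refl n⟩)
      omega
    have heq : opt n c (w - c n) = grd n c (w - c n) :=
      not_cex_eq hsys (by omega) hwc0 hnotcex
    have hgrd : grd n c w = grd n c (w - c n) + 1 := grd_top hsys (by omega) (by omega)
    have hop : 0 < opt n c w := opt_pos hsys.1 (by omega) hw0
    omega

end MinCexFacts

section Final

variable {n : ℕ} {c : ℕ → ℕ}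

lemma mincex_lt (hsys : IsSystem n c) (hn : 2 ≤ n) (hsub : Canonical (n-1) c)
    {w : ℕ} (hw : MinCex n c w) : w < c n + c (n-1) := by
  have hgt : c n < w := mincex_gt hsys hn hsub hw
  have hA : opt n c w = opt (n-1) c w := mincex_opt hsys hn hw hgt
  obtain ⟨⟨hw0, hwlt⟩, hmin⟩ := hw
  have hd : 0 < c (n-1) := coin_pos hsys (Finset.mem_Icc.mpr ⟨by omega, by omega⟩)
  have hcn : 0 < c n := coin_pos hsys (Finset.mem_Icc.mpr ⟨by omega, le_refl n⟩)
  have hsys' : IsSystem (n-1) c :=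
    ⟨hsys.1, hsys.2.mono (Set.Icc_subset_Icc_right (by exact_mod_cast Nat.sub_le n 1))⟩
  by_contra hcon
  obtain ⟨t, ht⟩ : ∃ t, w = c n + c (n-1) + t := ⟨w - c n - c (n-1), by omega⟩
  -- A) opt n c w = grd' w and B) peeling the top coin of the subsystem
  have hB : grd (n-1) c w = grd (n-1) c (c n + t) + 1 := by
    rw [grd_top hsys' (by omega) (by omega), show w - c (n-1) = c n + t by omega]
  have hC : opt n c (c n + t) ≤ grd (n-1) c (c n + t) :=
    le_trans (opt_restrict hsys.1 hn _) (opt_le_grd hsys' (by omega) _)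
  have hD : opt n c (c n + t) + 1 ≤ opt n c w := by
    have := hsub w hw0
    omega
  -- E) c n + t is not a counterexample
  have hE : opt n c (c n + t) = grd n c (c n + t) := by
    refine not_cex_eq hsys (by omega) (by omega) fun hcex => ?_
    have := hmin _ hcex
    omega
  -- F) greedy on c n + t
  have hF : grd n c (c n + t) = grd n c t + 1 := by
    rw [grd_top hsys (by omega) (by omega), show c n + t - c n = t by omega]
  -- G) greedy on w
  have hG : grd n c w = grd n c (c (n-1) + t) + 1 := by
    rw [grd_top hsys (by omega) (by omega), show w - c n = c (n-1) + t by omega]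
  -- H) c (n-1) + t is not a counterexample
  have hH : opt n c (c (n-1) + t) = grd n c (c (n-1) + t) := by
    refine not_cex_eq hsys (by omega) (by omega) fun hcex => ?_
    have := hmin _ hcex
    have hcn : 0 < c n := coin_pos hsys (Finset.mem_Icc.mpr ⟨by omega, le_refl n⟩)
    omega
  -- I) subadditivity bound
  have hI : opt n c (c (n-1) + t) ≤ 1 + grd n c t := by
    have h2 := opt_subadd hsys.1 (show 1 ≤ n by omega) (c (n-1)) t
    have h3 : opt n c (c (n-1)) ≤ 1 := by
      have := opt_le_coin (c := c) (Finset.mem_Icc.mpr ⟨(by omega : 1 ≤ n-1), (by omega : n-1 ≤ n)⟩) 1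
      rwa [mul_one] at this
    have h4 := opt_le_grd hsys (show 1 ≤ n by omega) t
    omega
  omega

end Final


/-- One-point theorem (grd form). -/
theorem one_point_theorem_grd (n : ℕ) (c : ℕ → ℕ) (hn : 2 ≤ n)
    (hsys : IsSystem n c) (hsub : Canonical (n - 1) c)
    (m : ℕ) (hm : m = (c n + c (n - 1) - 1) / c (n - 1)) :
    Canonical n c ↔ grd n c (m * c (n - 1)) ≤ m := by
  have h1 : c 1 = 1 := hsys.1
  have hsys' : IsSystem (n-1) c :=
    ⟨h1, hsys.2.mono (Set.Icc_subset_Icc_right (by exact_mod_cast Nat.sub_le n 1))⟩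
  have hd : 0 < c (n-1) := coin_pos hsys (Finset.mem_Icc.mpr ⟨by omega, by omega⟩)
  have hdn : c (n-1) < c n :=
    hsys.2 (Set.mem_Icc.mpr ⟨by omega, by omega⟩) (Set.mem_Icc.mpr ⟨by omega, le_refl n⟩)
      (by omega)
  have hcn : 0 < c n := by omega
  -- arithmetic facts about m
  have hdm := Nat.div_add_mod (c n + c (n-1) - 1) (c (n-1))
  have hmod : (c n + c (n-1) - 1) % c (n-1) < c (n-1) := Nat.mod_lt _ hd
  have hprod : c (n-1) * ((c n + c (n-1) - 1) / c (n-1)) = m * c (n-1) := by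
    rw [hm, mul_comm]
  rw [hprod] at hdm
  have hcnle : c n ≤ m * c (n-1) := by omega
  have hltm : m * c (n-1) < c n + c (n-1) := by omega
  have hm1 : 1 ≤ m := by
    rcases Nat.eq_zero_or_pos m with h | h
    · rw [h] at hcnle; simp at hcnle; omega
    · exact h
  constructor
  · intro hC
    have hpos : 0 < m * c (n-1) := by omega
    rw [← hC _ hpos]
    have := opt_le_coin (c := c)
      (Finset.mem_Icc.mpr ⟨(by omega : 1 ≤ n-1), (by omega : n-1 ≤ n)⟩) m
    rwa [mul_comm] at this
  · intro H
    by_contra hnc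
    have hex : ∃ u, IsCex n c u := by
      unfold Canonical at hnc
      push_neg at hnc
      obtain ⟨v, hv, hne⟩ := hnc
      exact ⟨v, hv, lt_of_le_of_ne (opt_le_grd hsys (by omega) v) hne⟩
    have hwmem : IsCex n c (sInf {u | IsCex n c u}) := Nat.sInf_mem hex
    set w := sInf {u | IsCex n c u} with hwdef
    have hwmin : MinCex n c w := ⟨hwmem, fun u hu => Nat.sInf_le hu⟩
    have hgt : c n < w := mincex_gt hsys hn hsub hwmin
    have hltw : w < c n + c (n-1) := mincex_lt hsys hn hsub hwmin
    obtain ⟨r, hreq⟩ : ∃ r, w = c n + r := ⟨w - c n, by omega⟩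
    have hr0 : 0 < r := by omega
    have hrd : r < c (n-1) := by omega
    have hsubAll : ∀ t, opt (n-1) c t = grd (n-1) c t := by
      intro t
      rcases Nat.eq_zero_or_pos t with rfl | h
      · rw [opt_zero, grd_zero]
      · exact hsub t h
    have hA : opt n c w = opt (n-1) c w := mincex_opt hsys hn hwmin hgt
    have hgw : grd n c w = grd (n-1) c r + 1 := by
      rw [grd_top hsys (by omega) (by omega), show w - c n = r by omega,
        grd_lower hsys hn r (by omega)]
    have hstar : grd (n-1) c (c n + r) ≤ grd (n-1) c r := by
      have h2 := hwmem.2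
      rw [hA, hsubAll w, hgw, hreq] at h2
      omega
    obtain ⟨r0, hr0eq⟩ : ∃ r0, m * c (n-1) = c n + r0 := ⟨m * c (n-1) - c n, by omega⟩
    have hr0d : r0 < c (n-1) := by omega
    have hHH : grd (n-1) c r0 + 1 ≤ m := by
      have hgmd : grd n c (m * c (n-1)) = grd (n-1) c r0 + 1 := by
        rw [grd_top hsys (by omega) (by omega), show m * c (n-1) - c n = r0 by omega,
          grd_lower hsys hn r0 (by omega)]
      omega
    rcases le_or_gt r0 r with hcase | hcase
    · obtain ⟨t, htr⟩ : ∃ t, r = r0 + t := ⟨r - r0, by omega⟩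
      have hweq : c n + r = m * c (n-1) + t := by omega
      have e1 : grd (n-1) c (c n + r) = m + grd (n-1) c t := by
        rw [hweq]; exact grd_mul_add hsys' (by omega) m t
      have e2 : opt (n-1) c r ≤ opt (n-1) c r0 + opt (n-1) c t := by
        rw [htr]; exact opt_subadd h1 (by omega) r0 t
      have e3 := opt_le_grd hsys' (by omega) r0
      have e4 := hsubAll r
      have e5 := hsubAll t
      omega
    · obtain ⟨s, hs⟩ : ∃ s, r + c (n-1) = r0 + s := ⟨r + c (n-1) - r0, by omega⟩
      have hs0 : 0 < s := by omega
      have hmm : (m-1) * c (n-1) + c (n-1) = m * c (n-1) := by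
        have h' : m - 1 + 1 = m := by omega
        calc (m-1) * c (n-1) + c (n-1) = ((m-1)+1) * c (n-1) := by ring
          _ = m * c (n-1) := by rw [h']
      have hweq : c n + r = (m-1) * c (n-1) + s := by omega
      have e1 : grd (n-1) c (c n + r) = (m-1) + grd (n-1) c s := by
        rw [hweq]; exact grd_mul_add hsys' (by omega) (m-1) s
      have e2 : grd (n-1) c (1 * c (n-1) + r) = 1 + grd (n-1) c r :=
        grd_mul_add hsys' (by omega) 1 r
      rw [one_mul] at e2
      have e3 : opt (n-1) c (c (n-1) + r) ≤ opt (n-1) c r0 + opt (n-1) c s := by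
        rw [show c (n-1) + r = r0 + s by omega]
        exact opt_subadd h1 (by omega) r0 s
      have e4 := opt_le_grd hsys' (by omega) r0
      have e5 := hsubAll s
      have e6 := hsubAll (c (n-1) + r)
      omega
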